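/- arXiv:1601.06899 — 6 statements merged into one kernel-verified Lean document; each statement's English description precedes it below -/
import Mathlib

section
/- If the code C has 𝔽_p-dimension m₁, then the quotient of the additive group (τ/p)·ℤ^m by its subgroup Λ₁ has exactly p^{m−m₁} elements (equivalently, the index of Λ₁ in p^{−1}Λ is p^{m−m₁}). -/
/-- The Construction-A lattice `Λ₁ = { (τ/p)·v(c) + τ·z : c ∈ C, z ∈ ℤ^m }`,
where `v` maps each element of `ZMod p` to its canonical representative in `ℝ`. -/
def ConstructionA (p m : ℕ) (τ : ℝ) (C : Submodule (ZMod p) (Fin m → ZMod p)) :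
    Set (Fin m → ℝ) :=
  {r | ∃ c ∈ C, ∃ z : Fin m → ℤ,
    r = fun i => (τ / p) * ((c i).val : ℝ) + τ * (z i : ℝ)}

/-- If `C` has `𝔽_p`-dimension `m₁`, then the quotient of the
additive group `(τ/p)·ℤ^m` by its subgroup `Λ₁` has exactly `p^{m−m₁}`
elements, i.e. the index of `Λ₁` in `p⁻¹Λ` is `p^{m−m₁}`. -/
theorem constructionA_quotient_card (p m m₁ : ℕ) (hp : p.Prime) (hm : 0 < m)
    (hm₁ : m₁ ≤ m) (τ : ℝ) (hτ : 0 < τ)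
    (C : Submodule (ZMod p) (Fin m → ZMod p))
    (hdim : Module.finrank (ZMod p) C = m₁)
    (L Λ₁ : AddSubgroup (Fin m → ℝ))
    (hL : (L : Set (Fin m → ℝ)) =
      {r : Fin m → ℝ | ∀ i, ∃ z : ℤ, r i = (τ / p) * (z : ℝ)})
    (hΛ₁ : (Λ₁ : Set (Fin m → ℝ)) = ConstructionA p m τ C) :
    Nat.card (↥L ⧸ Λ₁.addSubgroupOf L) = p ^ (m - m₁) := by
  haveI : Fact p.Prime := ⟨hp⟩
  have hp0 : (p : ℝ) ≠ 0 := Nat.cast_ne_zero.2 hp.pos.ne'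
  have hτp : (τ / p : ℝ) ≠ 0 := div_ne_zero hτ.ne' hp0
  have hmemL : ∀ r : Fin m → ℝ, r ∈ L ↔ ∀ i, ∃ z : ℤ, r i = (τ / p) * (z : ℝ) := by
    intro r
    rw [← SetLike.mem_coe, hL]; rfl
  have hz : ∀ r : L, ∀ i : Fin m, ∃ z : ℤ, (r : Fin m → ℝ) i = (τ / p) * (z : ℝ) :=
    fun r i => (hmemL r.1).1 r.2 i
  choose zf hzf using hz
  have huniq : ∀ a b : ℤ, (τ / p) * (a : ℝ) = (τ / p) * (b : ℝ) → a = b := by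
    intro a b h
    exact_mod_cast mul_left_cancel₀ hτp h
  -- the homomorphism to the quotient module
  let g : L →+ ((Fin m → ZMod p) ⧸ C) :=
  { toFun := fun r => Submodule.Quotient.mk (fun i => ((zf r i : ℤ) : ZMod p)),
    map_zero' := by
      have h0 : ∀ i, zf 0 i = 0 := by
        intro i
        refine huniq _ _ ?_
        rw [← hzf 0 i]
        simp
      simp only [h0, Int.cast_zero]
      have : (fun _ : Fin m => (0 : ZMod p)) = 0 := rfl
      rw [this, Submodule.Quotient.mk_eq_zero]
      exact C.zero_mem
    map_add' := by
      intro r s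
      have hadd : ∀ i, zf (r + s) i = zf r i + zf s i := by
        intro i
        refine huniq _ _ ?_
        rw [← hzf (r + s) i]
        have : ((r + s : L) : Fin m → ℝ) i = (r : Fin m → ℝ) i + (s : Fin m → ℝ) i := rfl
        rw [this, hzf r i, hzf s i]
        push_cast
        ring
      have : (fun i => ((zf (r + s) i : ℤ) : ZMod p))
          = (fun i => ((zf r i : ℤ) : ZMod p)) + fun i => ((zf s i : ℤ) : ZMod p) := by
        funext i
        simp [hadd i]
      show Submodule.Quotient.mk (fun i => ((zf (r + s) i : ℤ) : ZMod p))
          = Submodule.Quotient.mk (fun i => ((zf r i : ℤ) : ZMod p))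
            + Submodule.Quotient.mk (fun i => ((zf s i : ℤ) : ZMod p))
      rw [this, ← Submodule.Quotient.mk_add] }
  have hsurj : Function.Surjective g := by
    intro q
    obtain ⟨w, rfl⟩ := Submodule.Quotient.mk_surjective C q
    have hrL : (fun i => (τ / p) * ((w i).val : ℝ) : Fin m → ℝ) ∈ L := by
      rw [hmemL]
      intro i
      exact ⟨((w i).val : ℤ), by push_cast; ring⟩
    refine ⟨⟨_, hrL⟩, ?_⟩
    have hzeq : ∀ i, zf ⟨_, hrL⟩ i = ((w i).val : ℤ) := by
      intro i
      refine huniq _ _ ?_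
      rw [← hzf ⟨_, hrL⟩ i]
      push_cast
      rfl
    show Submodule.Quotient.mk _ = Submodule.Quotient.mk w
    congr 1
    funext i
    rw [hzeq i]
    push_cast
    simp [ZMod.natCast_val, ZMod.cast_id]
  have hker : Λ₁.addSubgroupOf L = g.ker := by
    ext r
    rw [AddSubgroup.mem_addSubgroupOf, ← SetLike.mem_coe, hΛ₁, AddMonoidHom.mem_ker]
    constructor
    · rintro ⟨c, hc, z, hrz⟩
      have hzeq : ∀ i, zf r i = ((c i).val : ℤ) + p * z i := by
        intro i
        refine huniq _ _ ?_
        rw [← hzf r i]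
        have : (r : Fin m → ℝ) i = (τ / p) * ((c i).val : ℝ) + τ * (z i : ℝ) := by
          rw [hrz]
        rw [this]
        push_cast
        field_simp
      show Submodule.Quotient.mk _ = (0 : (Fin m → ZMod p) ⧸ C)
      rw [Submodule.Quotient.mk_eq_zero]
      have : (fun i => ((zf r i : ℤ) : ZMod p)) = c := by
        funext i
        rw [hzeq i]
        push_cast
        simp [ZMod.natCast_val, ZMod.cast_id]
      rw [this]; exact hc
    · intro hr
      have hc : (fun i => ((zf r i : ℤ) : ZMod p)) ∈ C := by
        rwa [← Submodule.Quotient.mk_eq_zero]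
      refine ⟨_, hc, fun i => (zf r i - ((((zf r i : ℤ) : ZMod p)).val : ℤ)) / p, ?_⟩
      funext i
      set c : ZMod p := ((zf r i : ℤ) : ZMod p) with hcdef
      have hdvd : (p : ℤ) ∣ zf r i - (c.val : ℤ) := by
        rw [← ZMod.intCast_zmod_eq_zero_iff_dvd]
        push_cast
        simp [← hcdef, ZMod.natCast_val, ZMod.cast_id]
      have hdiv : ((zf r i - (c.val : ℤ)) / p) * p = zf r i - (c.val : ℤ) :=
        Int.ediv_mul_cancel hdvd
      have : (zf r i : ℝ) = (c.val : ℝ) + ((zf r i - (c.val : ℤ)) / p : ℤ) * p := by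
        rw_mod_cast [hdiv]
        push_cast
        ring
      rw [hzf r i, this]
      field_simp
      ring
  rw [hker, Nat.card_congr (QuotientAddGroup.quotientKerEquivOfSurjective g hsurj).toEquiv]
  -- cardinality of the quotient module
  haveI : Fintype ((Fin m → ZMod p) ⧸ C) := Fintype.ofFinite _
  have hq : Module.finrank (ZMod p) ((Fin m → ZMod p) ⧸ C) = m - m₁ := by
    have h1 := Submodule.finrank_quotient_add_finrank C
    rw [Module.finrank_fin_fun, hdim] at h1
    omega
  rw [Nat.card_eq_fintype_card, Module.card_eq_pow_finrank (K := ZMod p), ZMod.card, hq]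
end

section
/- The quantized noisy measurement equals a finite-field codeword combination plus discrete noise: for each coordinate i, the image in ZMod p of the integer round( (p/τ)·( Σ_{ℓ=1}^{n} t_{ℓ,i}·x_ℓ + ν_i ) ) equals Σ_{ℓ=1}^{n} (x_ℓ : ZMod p)·c_{ℓ,i} + (round((p/τ)·ν_i) : ZMod p). -/
/-- The quantized noisy measurement equals a finite-field codeword
combination plus discrete noise: for each coordinate `i`, the image in `ZMod p`
of the integer `round((p/τ)·(Σ_ℓ t_{ℓ,i}·x_ℓ + ν_i))` equals
`Σ_ℓ (x_ℓ : ZMod p)·c_{ℓ,i} + (round((p/τ)·ν_i) : ZMod p)`,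
where `t_{ℓ,i} = (τ/p)·v(c_{ℓ,i})`. -/
theorem quantized_measurement_finite_field (p m n : ℕ) (hp : p.Prime)
    (hm : 0 < m) (hn : 0 < n) (τ : ℝ) (hτ : 0 < τ)
    (c : Fin n → Fin m → ZMod p) (t : Fin n → Fin m → ℝ)
    (ht : ∀ ℓ i, t ℓ i = (τ / p) * (((c ℓ i).val : ℕ) : ℝ))
    (x : Fin n → ℤ) (ν : Fin m → ℝ) (i : Fin m) :
    ((round ((p / τ) * (∑ ℓ, t ℓ i * (x ℓ : ℝ) + ν i)) : ℤ) : ZMod p) =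
      ∑ ℓ, (x ℓ : ZMod p) * c ℓ i + ((round ((p / τ) * ν i) : ℤ) : ZMod p) := by
  haveI := Fact.mk hp
  have hp0 : (0:ℝ) < p := by exact_mod_cast hp.pos
  have key : (p / τ : ℝ) * (∑ ℓ, t ℓ i * (x ℓ : ℝ) + ν i)
      = ((∑ ℓ, ((c ℓ i).val : ℤ) * x ℓ : ℤ) : ℝ) + (p / τ) * ν i := by
    push_cast
    rw [mul_add, Finset.mul_sum]
    congr 1
    apply Finset.sum_congr rfl
    intro ℓ _
    rw [ht]
    field_simp
  rw [key, round_intCast_add]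
  push_cast [ZMod.natCast_val, ZMod.intCast_cast, ZMod.intCast_zmod_cast]
  simp [ZMod.natCast_val, ZMod.cast_id, mul_comm]
end

section
/- The p-level quantized measurement determines the finite-field measurement exactly: for each coordinate i, with y_i = S_p( Σ_{ℓ=1}^{n} t_{ℓ,i}·x_ℓ + ν_i ), the quantity (p/τ)·y_i is an integer, and its image in ZMod p equals Σ_{ℓ=1}^{n} (x_ℓ : ZMod p)·c_{ℓ,i} + z_i, where z_i = (round((p/τ)·ν_i) : ZMod p). -/
/-- The `p`-level sawtooth quantizer
`S_p(r) = (τ/p)·round(p·r/τ) − τ·⌊round(p·r/τ)/p⌋`: quantize `r` to the nearest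
point of `(τ/p)ℤ` and reduce modulo `τℤ` into `[0, τ)`. -/
noncomputable def sawtooth (p : ℕ) (τ : ℝ) (r : ℝ) : ℝ :=
  (τ / p) * ((round (p * r / τ) : ℤ) : ℝ) -
    τ * ((⌊((round (p * r / τ) : ℤ) : ℝ) / (p : ℝ)⌋ : ℤ) : ℝ)

/-- The `p`-level quantized measurement determines the
finite-field measurement exactly: for each coordinate `i`, with
`y_i = S_p(Σ_ℓ t_{ℓ,i}·x_ℓ + ν_i)`, the quantity `(p/τ)·y_i` is an integer
whose image in `ZMod p` equals `Σ_ℓ (x_ℓ : ZMod p)·c_{ℓ,i} + z_i`, where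
`z_i = (round((p/τ)·ν_i) : ZMod p)` and `t_{ℓ,i} = (τ/p)·v(c_{ℓ,i})`. -/
theorem sawtooth_measurement_determines_finite_field (p m n : ℕ) (hp : p.Prime)
    (hm : 0 < m) (hn : 0 < n) (τ : ℝ) (hτ : 0 < τ)
    (c : Fin n → Fin m → ZMod p) (t : Fin n → Fin m → ℝ)
    (ht : ∀ ℓ i, t ℓ i = (τ / p) * (((c ℓ i).val : ℕ) : ℝ))
    (x : Fin n → ℤ) (ν : Fin m → ℝ)
    (y : Fin m → ℝ) (hy : ∀ i, y i = sawtooth p τ (∑ ℓ, t ℓ i * (x ℓ : ℝ) + ν i))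
    (z : Fin m → ZMod p) (hz : ∀ i, z i = ((round ((p / τ) * ν i) : ℤ) : ZMod p))
    (i : Fin m) :
    ∃ q : ℤ, (p / τ) * y i = (q : ℝ) ∧
      (q : ZMod p) = ∑ ℓ, (x ℓ : ZMod p) * c ℓ i + z i := by
  haveI : Fact p.Prime := ⟨hp⟩
  have hp0 : (0:ℝ) < (p:ℝ) := by exact_mod_cast hp.pos
  have hτ0 : (τ:ℝ) ≠ 0 := ne_of_gt hτ
  have hpne : (p:ℝ) ≠ 0 := ne_of_gt hp0
  set K : ℤ := ∑ ℓ, (x ℓ) * ((c ℓ i).val : ℤ) with hK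
  set R : ℤ := round ((p / τ) * ν i) with hR
  have harg : (p : ℝ) * (∑ ℓ, t ℓ i * (x ℓ : ℝ) + ν i) / τ = (K : ℝ) + (p / τ) * ν i := by
    rw [hK]
    push_cast
    rw [mul_add, add_div, Finset.mul_sum, Finset.sum_div]
    congr 1
    · apply Finset.sum_congr rfl
      intro ℓ _
      rw [ht]
      field_simp
    · ring
  have hround : round ((p : ℝ) * (∑ ℓ, t ℓ i * (x ℓ : ℝ) + ν i) / τ) = K + R := by
    rw [harg, round_intCast_add]
  set N : ℤ := K + R with hN
  refine ⟨N - p * ⌊(N : ℝ) / (p : ℝ)⌋, ?_, ?_⟩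
  · rw [hy, sawtooth, hround]
    push_cast
    field_simp
  · push_cast
    simp [ZMod.natCast_self, hN, hK, hz, hR, ZMod.natCast_val, ZMod.intCast_cast]
end

section
/- Any nonzero vector in the kernel of an r-row Vandermonde parity-check matrix with distinct nodes has Hamming weight at least r + 1: if α : Fin n → F is injective, x : Fin n → F is not identically zero, and Σ_{j} x_j · α(j)^i = 0 for every i ∈ Fin r, then the support {j : x_j ≠ 0} has cardinality at least r + 1. -/
/-- Any nonzero vector in the kernel of an `r`-row Vandermonde
parity-check matrix with distinct nodes has Hamming weight at least `r + 1`: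
if `α : Fin n → F` is injective, `x` is not identically zero, and
`Σ_j x_j·α(j)^i = 0` for every `i ∈ Fin r`, then the support of `x` has
cardinality at least `r + 1`. -/
theorem vandermonde_kernel_min_weight {F : Type*} [Field F] [DecidableEq F]
    (n r : ℕ) (hr : 0 < r) (hrn : r < n)
    (α : Fin n → F) (hα : Function.Injective α)
    (x : Fin n → F) (hx : x ≠ 0)
    (hker : ∀ i : Fin r, ∑ j, x j * α j ^ (i : ℕ) = 0) :
    r + 1 ≤ (Finset.univ.filter fun j : Fin n => x j ≠ 0).card := by
  set S := Finset.univ.filter fun j : Fin n => x j ≠ 0 with hS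
  by_contra h
  push_neg at h
  have hcard : S.card ≤ r := Nat.lt_succ_iff.mp h
  -- embed Fin S.card into S
  set s := S.card with hs
  let e := S.orderIsoOfFin rfl
  -- build the Vandermonde matrix on the support nodes
  let β : Fin s → F := fun j => α (e j)
  have hβ : Function.Injective β := by
    intro a b hab
    exact e.injective (Subtype.ext (hα hab))
  let M : Matrix (Fin s) (Fin s) F := Matrix.transpose (Matrix.vandermonde β)
  have hdet : M.det ≠ 0 := by
    rw [Matrix.det_transpose]
    exact Matrix.det_vandermonde_ne_zero_iff.mpr hβ
  let y : Fin s → F := fun j => x (e j)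
  have hsum : ∀ i : Fin s, ∑ j : Fin s, β j ^ (i : ℕ) * y j = 0 := by
    intro i
    have hir : (i : ℕ) < r := lt_of_lt_of_le i.2 hcard
    have := hker ⟨i, hir⟩
    calc ∑ j : Fin s, β j ^ (i : ℕ) * y j
        = ∑ j ∈ S, x j * α j ^ (i : ℕ) := by
          rw [← Finset.sum_attach S (fun j => x j * α j ^ (i : ℕ))]
          refine Fintype.sum_equiv (S.orderIsoOfFin rfl).toEquiv _ _ ?_
          intro j; simp only [β, y, RelIso.coe_fn_toEquiv]; ring
      _ = ∑ j, x j * α j ^ (i : ℕ) := by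
          refine Finset.sum_subset (Finset.subset_univ S) ?_
          intro j _ hj
          simp only [hS, Finset.mem_filter, Finset.mem_univ, true_and, not_not] at hj
          simp [hj]
      _ = 0 := this
  have hMy : M.mulVec y = 0 := by
    funext i
    simpa [M, Matrix.mulVec, dotProduct, Matrix.vandermonde] using hsum i
  have hy : y = 0 := by
    have hinj := Matrix.mulVec_injective_iff_isUnit.2
      ((Matrix.isUnit_iff_isUnit_det M).2 (isUnit_iff_ne_zero.mpr hdet))
    have : M.mulVec y = M.mulVec 0 := by simp [hMy]
    exact hinj this
  -- but x is nonzero somewhere, and that index is in S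
  obtain ⟨j, hj⟩ : ∃ j, x j ≠ 0 := by
    by_contra hc; push_neg at hc; exact hx (funext hc)
  have hjS : j ∈ S := by simp [hS, hj]
  obtain ⟨k, hk⟩ := e.surjective ⟨j, hjS⟩
  have : y k = x j := by simp [y, hk]
  rw [hy] at this
  exact hj this.symm
end

section
/- A Vandermonde parity-check matrix with r rows and distinct nodes permits unique recovery of k-sparse vectors whenever 2k ≤ r: if α : Fin n → F is injective, H_{i,j} = α(j)^i for i ∈ Fin r, 2k ≤ r, and x, x' : Fin n → F each have at most k nonzero entries with H·x = H·x', then x = x'. (This is the perfect-recovery condition k ≤ ⌊(m̃₁+1)/2⌋ for syndrome decoding with the parity-check matrix of an [n, n−r] Reed–Solomon code.) -/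
/-- A Vandermonde parity-check matrix with `r` rows and distinct
nodes permits unique recovery of `k`-sparse vectors whenever `2k ≤ r`
(the perfect-recovery condition for syndrome decoding with the parity-check
matrix of an `[n, n−r]` Reed–Solomon code). -/
theorem vandermonde_sparse_recovery {F : Type*} [Field F] [DecidableEq F]
    (n r k : ℕ) (hr : 0 < r) (hrn : r < n) (hk : 0 < k)
    (α : Fin n → F) (hα : Function.Injective α)
    (H : Matrix (Fin r) (Fin n) F) (hH : ∀ i j, H i j = α j ^ (i : ℕ))
    (hkr : 2 * k ≤ r)
    (x x' : Fin n → F)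
    (hx : (Finset.univ.filter fun j : Fin n => x j ≠ 0).card ≤ k)
    (hx' : (Finset.univ.filter fun j : Fin n => x' j ≠ 0).card ≤ k)
    (h : H.mulVec x = H.mulVec x') :
    x = x' := by
  set y : Fin n → F := x - x' with hy
  suffices hy0 : y = 0 by
    funext j
    have := congrFun hy0 j
    simp [hy, sub_eq_zero] at this
    exact this
  set S : Finset (Fin n) := Finset.univ.filter fun j => y j ≠ 0 with hS
  -- support of y is contained in union of supports
  have hScard : S.card ≤ r := by
    have hsub : S ⊆ (Finset.univ.filter fun j : Fin n => x j ≠ 0) ∪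
        (Finset.univ.filter fun j : Fin n => x' j ≠ 0) := by
      intro j hj
      simp only [hS, Finset.mem_filter, Finset.mem_union, Finset.mem_univ, true_and] at *
      by_contra hc
      push_neg at hc
      exact hj (by show x j - x' j = 0; rw [hc.1, hc.2, sub_zero])
    calc S.card ≤ _ := Finset.card_le_card hsub
      _ ≤ _ + _ := Finset.card_union_le _ _
      _ ≤ k + k := Nat.add_le_add hx hx'
      _ ≤ r := by omega
  set s := S.card with hs
  set e := S.orderIsoOfFin rfl with he
  have key : (fun j : Fin s => y (e j)) = 0 := by
    apply Matrix.eq_zero_of_forall_pow_sum_mul_pow_eq_zero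
      (f := fun j : Fin s => α (e j))
    · intro a b hab
      exact (e.injective (Subtype.ext (hα hab)))
    · intro i
      have hir : (i : ℕ) < r := lt_of_lt_of_le i.2 hScard
      have hHy : H.mulVec y ⟨i, hir⟩ = 0 := by
        have : H.mulVec y = H.mulVec x - H.mulVec x' := by
          simp [hy, Matrix.mulVec_sub]
        rw [this, h, sub_self]
        rfl
      have hsum : ∑ j, y j * α j ^ (i : ℕ) = 0 := by
        rw [← hHy]
        simp only [Matrix.mulVec, dotProduct, hH]
        exact Finset.sum_congr rfl fun j _ => (mul_comm _ _)
      calc ∑ j : Fin s, y (e j) * α (e j) ^ (i : ℕ)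
          = ∑ j ∈ S, y j * α j ^ (i : ℕ) := by
            rw [← Finset.sum_attach S (fun j => y j * α j ^ (i : ℕ))]
            exact Fintype.sum_equiv e.toEquiv _ _ (fun j => rfl)
        _ = ∑ j, y j * α j ^ (i : ℕ) := by
            apply Finset.sum_subset (Finset.subset_univ S)
            intro j _ hj
            simp only [hS, Finset.mem_filter, Finset.mem_univ, true_and, not_not] at hj
            simp [hj]
        _ = 0 := hsum
  funext j
  show y j = 0
  by_contra hj
  have hjS : j ∈ S := by simp [hS, hj]
  have h2 : y ((e (e.symm ⟨j, hjS⟩)) : Fin n) = 0 := congrFun key (e.symm ⟨j, hjS⟩)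
  rw [OrderIso.apply_symm_apply] at h2
  exact hj h2
end

section
/- Sparse recovery over the prime subfield via a Reed–Solomon parity check over the extension field: let F be a field that is an algebra over ZMod p with injective algebra map, let α : Fin n → F be injective, let H̃_{i,j} = α(j)^i for i ∈ Fin r, and suppose 2k ≤ r. If x, x' : Fin n → ZMod p each have at most k nonzero entries and H̃·(algebraMap p F ∘ x) = H̃·(algebraMap p F ∘ x'), then x = x'. (This justifies recovering a p-ary sparse vector from syndromes computed over 𝔽_{p^s}.) -/
/-- Sparse recovery over the prime subfield via a Reed–Solomon
parity check over the extension field: if `F` is a `ZMod p`-algebra with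
injective algebra map, `α : Fin n → F` is injective, `H̃_{i,j} = α(j)^i` for
`i ∈ Fin r`, and `2k ≤ r`, then `k`-sparse vectors over `ZMod p` are uniquely
determined by their syndromes computed over `F`. -/
theorem sparse_recovery_over_prime_subfield (p : ℕ) (hp : p.Prime)
    {F : Type*} [Field F] [Algebra (ZMod p) F]
    (hinj : Function.Injective (algebraMap (ZMod p) F))
    (n r k : ℕ) (hr : 0 < r) (hrn : r < n) (hk : 0 < k)
    (α : Fin n → F) (hα : Function.Injective α)
    (Ht : Matrix (Fin r) (Fin n) F) (hHt : ∀ i j, Ht i j = α j ^ (i : ℕ))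
    (hkr : 2 * k ≤ r)
    (x x' : Fin n → ZMod p)
    (hx : (Finset.univ.filter fun j : Fin n => x j ≠ 0).card ≤ k)
    (hx' : (Finset.univ.filter fun j : Fin n => x' j ≠ 0).card ≤ k)
    (h : Ht.mulVec (fun j => algebraMap (ZMod p) F (x j)) =
      Ht.mulVec (fun j => algebraMap (ZMod p) F (x' j))) :
    x = x' := by
  classical
  set y : Fin n → F :=
    fun j => algebraMap (ZMod p) F (x j) - algebraMap (ZMod p) F (x' j) with hy
  suffices hy0 : ∀ j, y j = 0 by
    funext j
    have := hy0 j
    have : algebraMap (ZMod p) F (x j) = algebraMap (ZMod p) F (x' j) := by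
      simpa [hy, sub_eq_zero] using this
    exact hinj this
  -- syndrome equations for y
  have key : ∀ i : Fin r, ∑ j, α j ^ (i : ℕ) * y j = 0 := by
    intro i
    have hh := congrFun h i
    simp only [Matrix.mulVec, dotProduct] at hh
    simp only [hy, mul_sub, Finset.sum_sub_distrib, sub_eq_zero]
    simpa only [hHt] using hh
  -- support of y
  set S : Finset (Fin n) := Finset.univ.filter fun j => y j ≠ 0 with hS
  have hScard : S.card ≤ r := by
    have hsub : S ⊆ (Finset.univ.filter fun j : Fin n => x j ≠ 0) ∪
        (Finset.univ.filter fun j : Fin n => x' j ≠ 0) := by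
      intro j hj
      simp only [hS, Finset.mem_filter, Finset.mem_union, Finset.mem_univ, true_and] at hj ⊢
      by_contra hc
      push_neg at hc
      exact hj (by simp [hy, hc.1, hc.2])
    calc S.card ≤ _ := Finset.card_le_card hsub
      _ ≤ _ + _ := Finset.card_union_le _ _
      _ ≤ k + k := add_le_add hx hx'
      _ ≤ r := by omega
  set m := S.card with hm
  -- enumerate the support
  set e : Fin m → Fin n := fun j => (S.equivFin.symm j : Fin n) with he
  have he_inj : Function.Injective e := fun a b hab => by
    have := Subtype.ext hab
    simpa using S.equivFin.symm.injective this
  have he_mem : ∀ j, e j ∈ S := fun j => (S.equivFin.symm j).2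
  set v : Fin m → F := fun j => α (e j) with hv
  have hv_inj : Function.Injective v := fun a b hab => he_inj (hα hab)
  set M : Matrix (Fin m) (Fin m) F := Matrix.transpose (Matrix.vandermonde v) with hM
  have hdet : M.det ≠ 0 := by
    rw [hM, Matrix.det_transpose, Matrix.det_vandermonde]
    refine Finset.prod_ne_zero_iff.2 fun i _ => Finset.prod_ne_zero_iff.2 fun j hj => ?_
    have hij : i < j := Finset.mem_Ioi.mp hj
    exact sub_ne_zero.2 fun hc => absurd (hv_inj hc.symm) (Fin.ne_of_lt hij)
  have hmul : M.mulVec (fun j => y (e j)) = 0 := by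
    funext i
    have him : (i : ℕ) < r := lt_of_lt_of_le i.2 hScard
    have := key ⟨i, him⟩
    simp only [Matrix.mulVec, dotProduct, hM, Matrix.transpose_apply,
      Matrix.vandermonde, Matrix.of_apply, Pi.zero_apply]
    rw [← this]
    have hsum : ∑ j, α j ^ (i : ℕ) * y j = ∑ j ∈ S, α j ^ (i : ℕ) * y j := by
      refine (Finset.sum_subset (Finset.subset_univ S) ?_).symm
      intro j _ hjS
      have : y j = 0 := by
        by_contra hc
        exact hjS (by simp [hS, hc])
      simp [this]
    rw [hsum, ← Finset.sum_coe_sort S fun j => α j ^ (i : ℕ) * y j]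
    exact Fintype.sum_equiv S.equivFin.symm _ _ fun j => rfl
  have hz : (fun j => y (e j)) = 0 := Matrix.eq_zero_of_mulVec_eq_zero hdet hmul
  intro j
  by_contra hc
  have hjS : j ∈ S := by simp [hS, hc]
  have := congrFun hz (S.equivFin ⟨j, hjS⟩)
  simp only [he, Equiv.symm_apply_apply, Pi.zero_apply] at this
  exact hc this
end
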